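/- Let L be an N×N complex Hadamard matrix with a chosen logarithm matrix log L (entries in [0,1) with L_{jk} = e^{2πi (log L)_{jk}}). Suppose there exist an n-element index set I and m rows of log L that are pairwise I-equivalent. If M is any complex Hadamard matrix equivalent to L (M = D1 P1 L P2 D2 for unitary diagonal D1, D2 and permutations P1, P2), then log M also admits an n-element index set J and m rows that are pairwise J-equivalent. -/

import Mathlib

open Matrix Complex Real

/-- A complex Hadamard matrix: all entries unimodular and rows pairwise orthogonal. -/
def IsCHadamard {ι : Type*} [Fintype ι] [DecidableEq ι] (H : Matrix ι ι ℂ) : Prop :=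
  (∀ i j, ‖H i j‖ = 1) ∧ H * Hᴴ = (Fintype.card ι : ℂ) • 1

/-- Two rows `s, q` of a real matrix `A` are `I`-equivalent if the fractional parts
of the entrywise differences `A s i − A q i` agree for all `i ∈ I`. -/
def IEquivRows {N : ℕ} (A : Matrix (Fin N) (Fin N) ℝ) (I : Finset (Fin N))
    (s t : Fin N) : Prop :=
  ∃ c : ℝ, ∀ i ∈ I, Int.fract (A s i - A t i) = c

lemma entry_decomp (x a : ℝ) (u v : ℂ) (hu : ‖u‖ = 1) (hv : ‖v‖ = 1)
    (h : Complex.exp (2 * π * Complex.I * x) =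
      u * Complex.exp (2 * π * Complex.I * a) * v) :
    ∃ k : ℤ, x = u.arg / (2 * π) + a + v.arg / (2 * π) + k := by
  have hu' : u = Complex.exp (u.arg * Complex.I) := by
    conv_lhs => rw [← Complex.norm_mul_exp_arg_mul_I u]
    rw [hu, Complex.ofReal_one, one_mul]
  have hv' : v = Complex.exp (v.arg * Complex.I) := by
    conv_lhs => rw [← Complex.norm_mul_exp_arg_mul_I v]
    rw [hv, Complex.ofReal_one, one_mul]
  rw [hu', hv', ← Complex.exp_add, ← Complex.exp_add,
    Complex.exp_eq_exp_iff_exists_int] at h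
  obtain ⟨k, hk⟩ := h
  refine ⟨k, ?_⟩
  have him := congrArg Complex.im hk
  have hπ : (0:ℝ) < π := Real.pi_pos
  simp [Complex.add_im, Complex.mul_im, Complex.ofReal_im, Complex.ofReal_re] at him
  field_simp
  nlinarith [him]

/-- Existing `I`-equivalences between rows of the log-matrix are retained under
equivalence of Hadamard matrices. -/
theorem IEquiv_preserved_under_equivalence
    (N n m : ℕ) (L M : Matrix (Fin N) (Fin N) ℂ) (hL : IsCHadamard L)
    (logL logM : Matrix (Fin N) (Fin N) ℝ)
    (hrangeL : ∀ j k, logL j k ∈ Set.Ico (0 : ℝ) 1)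
    (hrangeM : ∀ j k, logM j k ∈ Set.Ico (0 : ℝ) 1)
    (hlogL : ∀ j k, L j k = Complex.exp (2 * π * Complex.I * (logL j k : ℂ)))
    (hlogM : ∀ j k, M j k = Complex.exp (2 * π * Complex.I * (logM j k : ℂ)))
    (d1 d2 : Fin N → ℂ)
    (hd1 : ∀ i, ‖d1 i‖ = 1) (hd2 : ∀ i, ‖d2 i‖ = 1)
    (p1 p2 : Equiv.Perm (Fin N))
    (hM : M = Matrix.diagonal d1 * p1.permMatrix ℂ * L * p2.permMatrix ℂ *
      Matrix.diagonal d2)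
    (I : Finset (Fin N)) (hI : I.card = n)
    (R : Finset (Fin N)) (hR : R.card = m)
    (hEq : ∀ s ∈ R, ∀ t ∈ R, IEquivRows logL I s t) :
    ∃ (J R' : Finset (Fin N)), J.card = n ∧ R'.card = m ∧
      ∀ s ∈ R', ∀ t ∈ R', IEquivRows logM J s t := by
  classical
  have hM' : ∀ i j, M i j = d1 i * L (p1 i) (p2.symm j) * d2 j := by
    intro i j
    have e1 : Matrix.diagonal d1 * p1.permMatrix ℂ * L =
        Matrix.diagonal d1 * (L.submatrix p1 id) := by
      rw [Matrix.mul_assoc, Equiv.Perm.permMatrix, PEquiv.toMatrix_toPEquiv_mul]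
    rw [hM, e1, Equiv.Perm.permMatrix, PEquiv.mul_toMatrix_toPEquiv,
      Matrix.mul_diagonal, Matrix.submatrix_apply, Matrix.diagonal_mul,
      Matrix.submatrix_apply]
    rfl
  -- decomposition of each entry of logM
  have hdec : ∀ s j, ∃ k : ℤ, logM s j = (d1 s).arg / (2 * π) +
      logL (p1 s) (p2.symm j) + (d2 j).arg / (2 * π) + k := by
    intro s j
    apply entry_decomp _ _ _ _ (hd1 s) (hd2 j)
    rw [← hlogM, ← hlogL, hM']
  refine ⟨I.image p2, R.image p1.symm, ?_, ?_, ?_⟩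
  · rw [Finset.card_image_of_injective _ p2.injective, hI]
  · rw [Finset.card_image_of_injective _ (p1.symm).injective, hR]
  · intro s hs t ht
    simp only [Finset.mem_image] at hs ht
    obtain ⟨s0, hs0, rfl⟩ := hs
    obtain ⟨t0, ht0, rfl⟩ := ht
    obtain ⟨c, hc⟩ := hEq s0 hs0 t0 ht0
    set δ : ℝ := ((d1 (p1.symm s0)).arg - (d1 (p1.symm t0)).arg) / (2 * π) with hδ
    refine ⟨Int.fract (δ + c), ?_⟩
    intro j hj
    simp only [Finset.mem_image] at hj
    obtain ⟨i, hi, rfl⟩ := hj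
    obtain ⟨k1, hk1⟩ := hdec (p1.symm s0) (p2 i)
    obtain ⟨k2, hk2⟩ := hdec (p1.symm t0) (p2 i)
    have hD := hc i hi
    set D : ℝ := logL s0 i - logL t0 i with hDdef
    rw [Int.fract_eq_fract]
    refine ⟨k1 - k2 + ⌊D⌋, ?_⟩
    have hfr : D - ⌊D⌋ = c := by rw [Int.self_sub_floor]; exact hD
    have hs' : p1 (p1.symm s0) = s0 := p1.apply_symm_apply s0
    have ht' : p1 (p1.symm t0) = t0 := p1.apply_symm_apply t0
    simp only [Equiv.symm_apply_apply, Equiv.apply_symm_apply] at hk1 hk2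
    rw [hk1, hk2]
    push_cast
    simp only [hδ]
    have h2π : (2:ℝ) * π ≠ 0 := by positivity
    simp only [hDdef] at hfr ⊢
    field_simp
    linear_combination (2*π) * hfr
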